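/- Consider a time-varying formation G(p(t)) in ℝ^d where the undirected graph G is acyclic and has a spanning tree (i.e., G is a tree, so m = n − 1), all edge vectors are nonzero, with bearings g_k(t) and bearing Laplacian L_B(t). Then the formation is bearing persistently exciting (there exist T > 0 and μ > 0 with ∫_t^{t+T} L_B(τ) dτ ≥ μ H̄ᵀH̄ for all t) if and only if every bearing g_k(t), k ∈ {1,…,n−1}, is persistently exciting. -/

import Mathlib

open MeasureTheory Matrix
open scoped Kronecker

/-- The projection operator `π_y = I_d - y yᵀ`. -/
noncomputable def proj {d : ℕ} (y : Fin d → ℝ) : Matrix (Fin d) (Fin d) ℝ :=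
  1 - Matrix.vecMulVec y y

/-- `H` is the incidence matrix of an oriented graph. -/
def IsIncidence {m n : ℕ} (H : Matrix (Fin m) (Fin n) ℝ) : Prop :=
  ∃ head tail : Fin m → Fin n, (∀ k, head k ≠ tail k) ∧
    ∀ k i, H k i = if i = head k then 1 else if i = tail k then -1 else 0

/-- `H̄ = H ⊗ I_d`. -/
noncomputable def Hbar {m n : ℕ} (d : ℕ) (H : Matrix (Fin m) (Fin n) ℝ) :
    Matrix (Fin m × Fin d) (Fin n × Fin d) ℝ :=
  H ⊗ₖ (1 : Matrix (Fin d) (Fin d) ℝ)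

/-- `Π = blkdiag(π_{g_1}, …, π_{g_m})`. -/
noncomputable def blkProj {m d : ℕ} (g : Fin m → Fin d → ℝ) :
    Matrix (Fin m × Fin d) (Fin m × Fin d) ℝ :=
  Matrix.of fun p q => if p.1 = q.1 then proj (g p.1) p.2 q.2 else 0

/-- Euclidean norm of a vector in `ℝ^d` given as `Fin d → ℝ`. -/
noncomputable def enorm {d : ℕ} (v : Fin d → ℝ) : ℝ := Real.sqrt (v ⬝ᵥ v)

/-- The bearing (unit vector) of a nonzero vector. -/
noncomputable def bearingOf {d : ℕ} (v : Fin d → ℝ) : Fin d → ℝ := (_root_.enorm v)⁻¹ • v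

/-- The `k`-th edge vector `e_k = (H̄ p)_k ∈ ℝ^d` of a configuration `p`. -/
noncomputable def edgeVec {m n d : ℕ} (H : Matrix (Fin m) (Fin n) ℝ)
    (p : Fin n × Fin d → ℝ) (k : Fin m) : Fin d → ℝ :=
  fun i => (Hbar d H).mulVec p (k, i)

/-- The bearing Laplacian `L_B = H̄ᵀ Π H̄` of a configuration `p`. -/
noncomputable def LB {m n : ℕ} {d : ℕ} (H : Matrix (Fin m) (Fin n) ℝ)
    (p : Fin n × Fin d → ℝ) : Matrix (Fin n × Fin d) (Fin n × Fin d) ℝ :=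
  (Hbar d H)ᵀ * blkProj (fun k => bearingOf (edgeVec H p k)) * Hbar d H

/-- `U = 1_n ⊗ I_d`. -/
noncomputable def Umat (n d : ℕ) : Matrix (Fin n × Fin d) (Fin d) ℝ :=
  Matrix.of fun p j => if p.2 = j then 1 else 0


/-! ### Auxiliary lemmas -/


lemma dotSelf_nonneg' {d : ℕ} (v : Fin d → ℝ) : 0 ≤ v ⬝ᵥ v :=
  Finset.sum_nonneg fun _ _ => mul_self_nonneg _

lemma dotSelf_pos' {d : ℕ} {v : Fin d → ℝ} (hv : v ≠ 0) : 0 < v ⬝ᵥ v :=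
  lt_of_le_of_ne (dotSelf_nonneg' v) fun h => hv (dotProduct_self_eq_zero.mp h.symm)

lemma enorm_sq' {d : ℕ} (v : Fin d → ℝ) : _root_.enorm v ^ 2 = v ⬝ᵥ v :=
  Real.sq_sqrt (dotSelf_nonneg' v)

lemma proj_entry {d : ℕ} {v : Fin d → ℝ} (hv : v ≠ 0) (i j : Fin d) :
    proj (bearingOf v) i j = (if i = j then 1 else 0) - v i * v j / (v ⬝ᵥ v) := by
  have h1 := enorm_sq' v
  have h2 : (0:ℝ) < v ⬝ᵥ v := dotSelf_pos' hv
  have h3 : _root_.enorm v ≠ 0 := by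
    intro h; rw [h] at h1; simp at h1; exact h2.ne h1
  simp only [proj, bearingOf, Matrix.sub_apply, Matrix.one_apply, Matrix.vecMulVec_apply,
    Pi.smul_apply, smul_eq_mul]
  congr 1
  rw [eq_div_iff h2.ne', ← h1, sq]
  have : (_root_.enorm v)⁻¹ * v i * ((_root_.enorm v)⁻¹ * v j) * (_root_.enorm v * _root_.enorm v)
      = ((_root_.enorm v)⁻¹ * _root_.enorm v) * (((_root_.enorm v)⁻¹ * _root_.enorm v) * (v i * v j)) := by ring
  rw [this, inv_mul_cancel₀ h3]; ring

lemma bearing_unit {d : ℕ} {v : Fin d → ℝ} (hv : v ≠ 0) :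
    bearingOf v ⬝ᵥ bearingOf v = 1 := by
  have h1 := enorm_sq' v
  have h2 : (0:ℝ) < v ⬝ᵥ v := dotSelf_pos' hv
  have h3 : _root_.enorm v ≠ 0 := by intro h; rw [h] at h1; simp at h1; exact h2.ne h1
  simp only [bearingOf, dotProduct, Pi.smul_apply, smul_eq_mul]
  have : ∑ i, (_root_.enorm v)⁻¹ * v i * ((_root_.enorm v)⁻¹ * v i)
      = (_root_.enorm v)⁻¹ ^ 2 * (v ⬝ᵥ v) := by
    rw [dotProduct, Finset.mul_sum]; exact Finset.sum_congr rfl fun i _ => by ring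
  rw [this, ← h1]
  field_simp

lemma proj_mulVec {d : ℕ} (y x : Fin d → ℝ) :
    (proj y).mulVec x = fun i => x i - y i * (y ⬝ᵥ x) := by
  ext i
  simp only [proj, mulVec, dotProduct, Matrix.sub_apply, Matrix.one_apply,
    Matrix.vecMulVec_apply, sub_mul, Finset.sum_sub_distrib, ite_mul, one_mul, zero_mul,
    Finset.sum_ite_eq, Finset.mem_univ, if_true]
  congr 1
  rw [Finset.mul_sum]
  exact Finset.sum_congr rfl fun j _ => by ring

lemma dot_proj {d : ℕ} (y x : Fin d → ℝ) :
    x ⬝ᵥ (proj y).mulVec x = x ⬝ᵥ x - (y ⬝ᵥ x) ^ 2 := by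
  rw [proj_mulVec]
  simp only [dotProduct, mul_sub, Finset.sum_sub_distrib]
  congr 1
  have : ∀ i : Fin d, x i * (y i * (∑ j, y j * x j)) = (y i * x i) * (∑ j, y j * x j) :=
    fun i => by ring
  rw [Finset.sum_congr rfl fun i _ => this i, ← Finset.sum_mul, sq]

lemma dot_proj_nonneg {d : ℕ} {v : Fin d → ℝ} (hv : v ≠ 0) (x : Fin d → ℝ) :
    0 ≤ x ⬝ᵥ (proj (bearingOf v)).mulVec x := by
  rw [dot_proj]
  have cs := Finset.sum_mul_sq_le_sq_mul_sq Finset.univ (bearingOf v) x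
  have h1 : (∑ i, bearingOf v i ^ 2) = 1 := by
    have := bearing_unit hv
    simpa [dotProduct, sq] using this
  have h2 : (bearingOf v ⬝ᵥ x) ^ 2 ≤ x ⬝ᵥ x := by
    calc (bearingOf v ⬝ᵥ x) ^ 2 ≤ (∑ i, bearingOf v i ^ 2) * ∑ i, x i ^ 2 := by
          simpa [dotProduct] using cs
      _ = x ⬝ᵥ x := by rw [h1, one_mul]; simp [dotProduct, sq]
  linarith

lemma hbar_mulVec {m n d : ℕ} (H : Matrix (Fin m) (Fin n) ℝ)
    (z : Fin n × Fin d → ℝ) (k : Fin m) (i : Fin d) :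
    (Hbar d H).mulVec z (k, i) = H.mulVec (fun j => z (j, i)) k := by
  simp only [Hbar, mulVec, dotProduct, kroneckerMap_apply, Matrix.one_apply,
    Fintype.sum_prod_type, mul_ite, mul_one, mul_zero, Finset.sum_ite_eq,
    Finset.mem_univ, if_true]
  exact Finset.sum_congr rfl fun j _ => by simp [ite_mul]

lemma dot_blkProj {m d : ℕ} (g : Fin m → Fin d → ℝ) (y : Fin m × Fin d → ℝ) :
    y ⬝ᵥ (blkProj g).mulVec y
      = ∑ k, (fun i => y (k, i)) ⬝ᵥ (proj (g k)).mulVec (fun i => y (k, i)) := by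
  simp only [dotProduct, mulVec, blkProj, Matrix.of_apply, Fintype.sum_prod_type]
  refine Finset.sum_congr rfl fun k _ => Finset.sum_congr rfl fun i _ => ?_
  congr 1
  rw [Finset.sum_comm]
  refine Finset.sum_congr rfl fun l _ => ?_
  simp [ite_mul]

lemma dot_sandwich {m n d : ℕ} (H : Matrix (Fin m) (Fin n) ℝ)
    (M : Matrix (Fin m × Fin d) (Fin m × Fin d) ℝ) (x : Fin n × Fin d → ℝ) :
    x ⬝ᵥ ((Hbar d H)ᵀ * M * Hbar d H).mulVec x
      = ((Hbar d H).mulVec x) ⬝ᵥ M.mulVec ((Hbar d H).mulVec x) := by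
  rw [← Matrix.mulVec_mulVec, ← Matrix.mulVec_mulVec, Matrix.dotProduct_mulVec,
    Matrix.vecMul_transpose]

lemma mulVec_surj {m n : ℕ} (H : Matrix (Fin m) (Fin n) ℝ) (hrank : H.rank = m) :
    Function.Surjective H.mulVec := by
  have h : Module.finrank ℝ (LinearMap.range H.mulVecLin) = m := hrank
  have htop : LinearMap.range H.mulVecLin = ⊤ :=
    Submodule.eq_top_of_finrank_eq (h.trans (Module.finrank_fin_fun ℝ).symm)
  intro y
  obtain ⟨z, hz⟩ := LinearMap.range_eq_top.mp htop y
  exact ⟨z, hz⟩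

lemma dot_integral_swap {ι : Type*} [Fintype ι] (t s : ℝ) (f : ℝ → Matrix ι ι ℝ)
    (hf : ∀ a b, IntervalIntegrable (fun τ => f τ a b) volume t s) (x : ι → ℝ) :
    x ⬝ᵥ (Matrix.of fun a b => ∫ τ in t..s, f τ a b).mulVec x
      = ∫ τ in t..s, x ⬝ᵥ (f τ).mulVec x := by
  have key : ∀ a : ι, IntervalIntegrable (fun τ => ∑ b, x a * (f τ a b * x b)) volume t s := by
    intro a
    have h1 := IntervalIntegrable.sum (μ := volume) (a := t) (b := s)
      (f := fun b τ => x a * (f τ a b * x b)) Finset.univ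
      (fun b _ => ((hf a b).mul_const (x b)).const_mul (x a))
    have h2 : (∑ b : ι, fun τ => x a * (f τ a b * x b))
        = fun τ => ∑ b, x a * (f τ a b * x b) := by ext τ; simp
    rwa [h2] at h1
  simp only [dotProduct, mulVec, Matrix.of_apply, Finset.mul_sum]
  have step : ∀ a b : ι, x a * ((∫ τ in t..s, f τ a b) * x b)
      = ∫ τ in t..s, x a * (f τ a b * x b) := by
    intro a b
    rw [← intervalIntegral.integral_mul_const, ← intervalIntegral.integral_const_mul]
  calc ∑ a, ∑ b, x a * ((∫ τ in t..s, f τ a b) * x b)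
      = ∑ a, ∑ b, ∫ τ in t..s, x a * (f τ a b * x b) :=
        Finset.sum_congr rfl fun a _ => Finset.sum_congr rfl fun b _ => step a b
    _ = ∑ a, ∫ τ in t..s, ∑ b, x a * (f τ a b * x b) := by
        refine Finset.sum_congr rfl fun a _ => ?_
        exact (intervalIntegral.integral_finset_sum
          (f := fun b τ => x a * (f τ a b * x b))
          fun b _ => ((hf a b).mul_const (x b)).const_mul (x a)).symm
    _ = ∫ τ in t..s, ∑ a, ∑ b, x a * (f τ a b * x b) :=
        (intervalIntegral.integral_finset_sum
          (f := fun a τ => ∑ b, x a * (f τ a b * x b)) fun a _ => key a).symm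
    _ = _ := by
        refine intervalIntegral.integral_congr fun τ _ => ?_
        simp [dotProduct, mulVec, Finset.mul_sum]

lemma cont_edge {m n d : ℕ} (H : Matrix (Fin m) (Fin n) ℝ)
    (p : ℝ → Fin n × Fin d → ℝ) (hp : Continuous p) (k : Fin m) (i : Fin d) :
    Continuous fun τ => edgeVec H (p τ) k i := by
  simp only [edgeVec, mulVec, dotProduct]
  exact continuous_finset_sum _ fun q _ => continuous_const.mul ((continuous_apply q).comp hp)

lemma cont_proj_entry {m n d : ℕ} (H : Matrix (Fin m) (Fin n) ℝ)
    (p : ℝ → Fin n × Fin d → ℝ) (hp : Continuous p) (k : Fin m)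
    (hnz : ∀ τ, edgeVec H (p τ) k ≠ 0) (i j : Fin d) :
    Continuous fun τ => proj (bearingOf (edgeVec H (p τ) k)) i j := by
  have hcont := cont_edge H p hp k
  have hdot : Continuous fun τ => (edgeVec H (p τ) k) ⬝ᵥ (edgeVec H (p τ) k) := by
    simp only [dotProduct]
    exact continuous_finset_sum _ fun l _ => (hcont l).mul (hcont l)
  have heq : (fun τ => proj (bearingOf (edgeVec H (p τ) k)) i j)
      = fun τ => (if i = j then 1 else 0)
          - edgeVec H (p τ) k i * edgeVec H (p τ) k j
            / (edgeVec H (p τ) k ⬝ᵥ edgeVec H (p τ) k) :=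
    funext fun τ => proj_entry (hnz τ) i j
  rw [heq]
  exact continuous_const.sub
    (((hcont i).mul (hcont j)).div hdot fun τ => (dotSelf_pos' (hnz τ)).ne')

lemma cont_LB_entry {m n d : ℕ} (H : Matrix (Fin m) (Fin n) ℝ)
    (p : ℝ → Fin n × Fin d → ℝ) (hp : Continuous p)
    (hnz : ∀ τ : ℝ, ∀ k : Fin m, edgeVec H (p τ) k ≠ 0) (a b : Fin n × Fin d) :
    Continuous fun τ => LB H (p τ) a b := by
  simp only [LB, Matrix.mul_apply]
  refine continuous_finset_sum _ fun v _ => Continuous.mul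
    (continuous_finset_sum _ fun u _ => Continuous.mul continuous_const ?_) continuous_const
  by_cases h : u.1 = v.1
  · simp only [blkProj, Matrix.of_apply, h, if_true]
    exact cont_proj_entry H p hp v.1 (fun τ => hnz τ v.1) u.2 v.2
  · simp only [blkProj, Matrix.of_apply, h, if_false]
    exact continuous_const

lemma cont_quad {m n d : ℕ} (H : Matrix (Fin m) (Fin n) ℝ)
    (p : ℝ → Fin n × Fin d → ℝ) (hp : Continuous p) (k : Fin m)
    (hnz : ∀ τ, edgeVec H (p τ) k ≠ 0) (w : Fin d → ℝ) :
    Continuous fun τ => w ⬝ᵥ (proj (bearingOf (edgeVec H (p τ) k))).mulVec w := by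
  simp only [dotProduct, mulVec]
  refine continuous_finset_sum _ fun i _ => Continuous.mul continuous_const ?_
  exact continuous_finset_sum _ fun j _ =>
    (cont_proj_entry H p hp k hnz i j).mul continuous_const

/-- for a formation over a tree (acyclic with a spanning tree, so
`m = n - 1` and `rank H = n - 1`), the formation is bearing persistently exciting if
and only if every bearing `g_k(t)`, `k ∈ {1,…,n-1}`, is persistently exciting. -/
theorem statement_7 {d m n : ℕ} (hd : 2 ≤ d)
    (H : Matrix (Fin m) (Fin n) ℝ) (hH : IsIncidence H)
    -- the graph is a tree: `m = n - 1` edges and the graph is connected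
    (hn : n = m + 1) (hrank : H.rank = m)
    (p : ℝ → Fin n × Fin d → ℝ) (hp : Continuous p)
    (hnz : ∀ t : ℝ, ∀ k : Fin m, edgeVec H (p t) k ≠ 0) :
    -- the formation is BPE: spanning tree plus `L_B(t)` PE w.r.t. `L`
    (H.rank = n - 1 ∧ ∃ T > (0 : ℝ), ∃ μ > (0 : ℝ), ∀ t : ℝ, ∀ x : Fin n × Fin d → ℝ,
        μ * (x ⬝ᵥ ((Hbar d H)ᵀ * Hbar d H).mulVec x) ≤
          x ⬝ᵥ (Matrix.of fun a b => ∫ τ in t..(t + T), LB H (p τ) a b).mulVec x) ↔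
    -- every bearing is PE
    (∀ k : Fin m, ∃ T > (0 : ℝ), ∃ μ > (0 : ℝ), ∀ t : ℝ, ∀ x : Fin d → ℝ,
        μ * (x ⬝ᵥ x) ≤
          x ⬝ᵥ (Matrix.of fun i j =>
            ∫ τ in t..(t + T), proj (bearingOf (edgeVec H (p τ) k)) i j).mulVec x) := by
  have hrank' : H.rank = n - 1 := by rw [hrank]; omega
  have hLBc : ∀ a b, Continuous fun τ => LB H (p τ) a b := cont_LB_entry H p hp hnz
  have hP : ∀ (k : Fin m) i j, Continuous fun τ => proj (bearingOf (edgeVec H (p τ) k)) i j :=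
    fun k => cont_proj_entry H p hp k (fun τ => hnz τ k)
  have quadLB : ∀ (τ : ℝ) (z : Fin n × Fin d → ℝ),
      z ⬝ᵥ (LB H (p τ)).mulVec z
        = ∑ k, (fun i => (Hbar d H).mulVec z (k, i)) ⬝ᵥ
            (proj (bearingOf (edgeVec H (p τ) k))).mulVec
              (fun i => (Hbar d H).mulVec z (k, i)) := by
    intro τ z
    rw [LB, dot_sandwich, dot_blkProj]
  have quadL : ∀ z : Fin n × Fin d → ℝ,
      z ⬝ᵥ ((Hbar d H)ᵀ * Hbar d H).mulVec z
        = ∑ k, (fun i => (Hbar d H).mulVec z (k, i)) ⬝ᵥ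
            (fun i => (Hbar d H).mulVec z (k, i)) := by
    intro z
    rw [← Matrix.mulVec_mulVec, Matrix.dotProduct_mulVec, Matrix.vecMul_transpose]
    simp [dotProduct, Fintype.sum_prod_type]
  constructor
  · rintro ⟨-, T, hT, μ, hμ, hPE⟩ k
    refine ⟨T, hT, μ, hμ, fun t x => ?_⟩
    obtain ⟨z, hz⟩ : ∃ z, (Hbar d H).mulVec z = fun q => if q.1 = k then x q.2 else 0 := by
      have hs := mulVec_surj H hrank
      choose w hw using fun i : Fin d => hs (fun k' => if k' = k then x i else 0)
      refine ⟨fun q => w q.2 q.1, ?_⟩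
      funext q
      obtain ⟨k', i⟩ := q
      rw [hbar_mulVec]
      exact congrFun (hw i) k'
    have hzk : ∀ k' i, (Hbar d H).mulVec z (k', i) = if k' = k then x i else 0 :=
      fun k' i => congrFun hz (k', i)
    have e1 : ∀ τ, z ⬝ᵥ (LB H (p τ)).mulVec z
        = x ⬝ᵥ (proj (bearingOf (edgeVec H (p τ) k))).mulVec x := by
      intro τ
      rw [quadLB τ z, Finset.sum_eq_single k]
      · have hx : (fun i => (Hbar d H).mulVec z (k, i)) = x :=
          funext fun i => by rw [hzk]; simp
        rw [hx]
      · intro k' _ hk'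
        have h0 : (fun i => (Hbar d H).mulVec z (k', i)) = (fun _ => (0:ℝ)) :=
          funext fun i => by rw [hzk]; simp [hk']
        rw [h0]
        simp [dotProduct]
      · intro h; exact absurd (Finset.mem_univ k) h
    have e2 : z ⬝ᵥ ((Hbar d H)ᵀ * Hbar d H).mulVec z = x ⬝ᵥ x := by
      rw [quadL, Finset.sum_eq_single k]
      · have hx : (fun i => (Hbar d H).mulVec z (k, i)) = x :=
          funext fun i => by rw [hzk]; simp
        rw [hx]
      · intro k' _ hk'
        have h0 : (fun i => (Hbar d H).mulVec z (k', i)) = (fun _ => (0:ℝ)) :=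
          funext fun i => by rw [hzk]; simp [hk']
        rw [h0]
        simp [dotProduct]
      · intro h; exact absurd (Finset.mem_univ k) h
    calc μ * (x ⬝ᵥ x) = μ * (z ⬝ᵥ ((Hbar d H)ᵀ * Hbar d H).mulVec z) := by rw [e2]
      _ ≤ z ⬝ᵥ (Matrix.of fun a b => ∫ τ in t..(t + T), LB H (p τ) a b).mulVec z := hPE t z
      _ = ∫ τ in t..(t + T), z ⬝ᵥ (LB H (p τ)).mulVec z :=
          dot_integral_swap _ _ _ (fun a b => (hLBc a b).intervalIntegrable _ _) z
      _ = ∫ τ in t..(t + T), x ⬝ᵥ (proj (bearingOf (edgeVec H (p τ) k))).mulVec x :=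
          intervalIntegral.integral_congr fun τ _ => e1 τ
      _ = x ⬝ᵥ (Matrix.of fun i j =>
            ∫ τ in t..(t + T), proj (bearingOf (edgeVec H (p τ) k)) i j).mulVec x :=
          (dot_integral_swap _ _ _ (fun i j => (hP k i j).intervalIntegrable _ _) x).symm
  · intro h
    rcases Nat.eq_zero_or_pos m with hm | hm
    · subst hm
      refine ⟨hrank', 1, one_pos, 1, one_pos, fun t z => ?_⟩
      rw [quadL z, dot_integral_swap _ _ _
        (fun a b => (hLBc a b).intervalIntegrable _ _) z]
      have hz0 : ∀ τ ∈ Set.uIcc t (t + 1), z ⬝ᵥ (LB H (p τ)).mulVec z = 0 := by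
        intro τ _
        rw [quadLB τ z]
        simp
      rw [intervalIntegral.integral_congr hz0]
      simp
    · choose T hT μ hμ hPE using h
      haveI : Nonempty (Fin m) := ⟨⟨0, hm⟩⟩
      set Tm : ℝ := 1 + ∑ k, T k with hTmdef
      have hTsum : (0:ℝ) ≤ ∑ k, T k := Finset.sum_nonneg fun k _ => (hT k).le
      have hTm : 0 < Tm := by rw [hTmdef]; linarith
      have hTk_le : ∀ k, T k ≤ Tm := by
        intro k
        have := Finset.single_le_sum (f := T) (fun j _ => (hT j).le) (Finset.mem_univ k)
        rw [hTmdef]; linarith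
      set μ0 : ℝ := Finset.univ.inf' Finset.univ_nonempty μ with hμ0def
      have hμ0 : 0 < μ0 := by
        rw [hμ0def, Finset.lt_inf'_iff]
        exact fun k _ => hμ k
      have hμ0le : ∀ k, μ0 ≤ μ k := fun k => Finset.inf'_le _ (Finset.mem_univ k)
      refine ⟨hrank', Tm, hTm, μ0, hμ0, fun t z => ?_⟩
      rw [dot_integral_swap _ _ _ (fun a b => (hLBc a b).intervalIntegrable _ _) z]
      set w : Fin m → Fin d → ℝ := fun k i => (Hbar d H).mulVec z (k, i) with hwdef
      have hqint : ∀ (k : Fin m) (a b : ℝ), IntervalIntegrable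
          (fun τ => (w k) ⬝ᵥ (proj (bearingOf (edgeVec H (p τ) k))).mulVec (w k))
          volume a b :=
        fun k a b => (cont_quad H p hp k (fun τ => hnz τ k) (w k)).intervalIntegrable _ _
      have key : ∀ k : Fin m, μ0 * ((w k) ⬝ᵥ (w k))
          ≤ ∫ τ in t..(t + Tm),
              (w k) ⬝ᵥ (proj (bearingOf (edgeVec H (p τ) k))).mulVec (w k) := by
        intro k
        have hsplit : (∫ τ in t..(t + T k),
              (w k) ⬝ᵥ (proj (bearingOf (edgeVec H (p τ) k))).mulVec (w k))
            + ∫ τ in (t + T k)..(t + Tm),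
              (w k) ⬝ᵥ (proj (bearingOf (edgeVec H (p τ) k))).mulVec (w k)
            = ∫ τ in t..(t + Tm),
              (w k) ⬝ᵥ (proj (bearingOf (edgeVec H (p τ) k))).mulVec (w k) :=
          intervalIntegral.integral_add_adjacent_intervals (hqint k _ _) (hqint k _ _)
        have h1 : μ k * (w k ⬝ᵥ w k) ≤ ∫ τ in t..(t + T k),
            (w k) ⬝ᵥ (proj (bearingOf (edgeVec H (p τ) k))).mulVec (w k) := by
          have := hPE k t (w k)
          rwa [dot_integral_swap _ _ _
            (fun i j => (hP k i j).intervalIntegrable _ _) (w k)] at this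
        have h2 : 0 ≤ ∫ τ in (t + T k)..(t + Tm),
            (w k) ⬝ᵥ (proj (bearingOf (edgeVec H (p τ) k))).mulVec (w k) :=
          intervalIntegral.integral_nonneg (by linarith [hTk_le k])
            (fun τ _ => dot_proj_nonneg (hnz τ k) (w k))
        have h3 : μ0 * (w k ⬝ᵥ w k) ≤ μ k * (w k ⬝ᵥ w k) :=
          mul_le_mul_of_nonneg_right (hμ0le k) (dotSelf_nonneg' _)
        linarith
      calc μ0 * (z ⬝ᵥ ((Hbar d H)ᵀ * Hbar d H).mulVec z)
          = ∑ k, μ0 * (w k ⬝ᵥ w k) := by rw [quadL z, Finset.mul_sum]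
        _ ≤ ∑ k, ∫ τ in t..(t + Tm),
              (w k) ⬝ᵥ (proj (bearingOf (edgeVec H (p τ) k))).mulVec (w k) :=
            Finset.sum_le_sum fun k _ => key k
        _ = ∫ τ in t..(t + Tm), ∑ k,
              (w k) ⬝ᵥ (proj (bearingOf (edgeVec H (p τ) k))).mulVec (w k) :=
            (intervalIntegral.integral_finset_sum
              (f := fun k τ =>
                (w k) ⬝ᵥ (proj (bearingOf (edgeVec H (p τ) k))).mulVec (w k))
              fun k _ => hqint k _ _).symm
        _ = ∫ τ in t..(t + Tm), z ⬝ᵥ (LB H (p τ)).mulVec z :=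
            intervalIntegral.integral_congr fun τ _ => (quadLB τ z).symm
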